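/- The rational point (-1/15, -17/15, 6/5) satisfies x^3 + y^3 + 2*z^3 = 2, and its 2-adic distances to (9, 9, -2*c), where c is the cube root of 91 in Z_2, satisfy v_2(x-9) ≥ 3, v_2(y-9) ≥ 3, v_2(z+2c) ≥ 2. -/

import Mathlib

private lemma pvq19 (k : ℕ) (m n : ℤ) (hm : ¬ (2:ℤ) ∣ m) (hn : ¬ (2:ℤ) ∣ n)
    (hm0 : m ≠ 0) (hn0 : n ≠ 0) :
    padicValRat 2 (((2 ^ k * m : ℤ) : ℚ) / ((n : ℤ) : ℚ)) = k := by
  haveI : Fact (Nat.Prime 2) := ⟨Nat.prime_two⟩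
  rw [padicValRat.div (by exact_mod_cast mul_ne_zero (by positivity) hm0) (by exact_mod_cast hn0),
    padicValRat.of_int, padicValRat.of_int,
    padicValInt.mul (by positivity) hm0, padicValInt.eq_zero_of_not_dvd hm,
    padicValInt.eq_zero_of_not_dvd hn]
  simp [padicValInt, Int.natAbs_pow, padicValNat.prime_pow]

/-- The rational point `(-1/15, -17/15, 6/5)` lies on `x³ + y³ + 2z³ = 2` and is 2-adically
close to the solution `(9, 9, -2c)`, where `c` is the cube root of `91` in `ℤ₂`:
`v₂(x - 9) ≥ 3`, `v₂(y - 9) ≥ 3` and `v₂(z + 2c) ≥ 2`. -/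
theorem stmt_19 (c : ℤ_[2]) (hc : c ^ 3 = 91) :
    ((-1 / 15 : ℚ) ^ 3 + (-17 / 15 : ℚ) ^ 3 + 2 * (6 / 5 : ℚ) ^ 3 = 2) ∧
    3 ≤ ((-1 / 15 : ℚ_[2]) - 9).valuation ∧
    3 ≤ ((-17 / 15 : ℚ_[2]) - 9).valuation ∧
    2 ≤ ((6 / 5 : ℚ_[2]) + 2 * (c : ℚ_[2])).valuation := by
  refine ⟨by norm_num, ?_, ?_, ?_⟩
  · have h1 : ((-1/15 : ℚ_[2]) - 9) = (((-136/15 : ℚ)) : ℚ_[2]) := by push_cast; ring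
    have h2 := pvq19 3 (-17) 15 (by decide) (by decide) (by norm_num) (by norm_num)
    rw [show ((((2:ℤ)^3*(-17) : ℤ) : ℚ) / (((15:ℤ)) : ℚ)) = (-136/15 : ℚ) by norm_num] at h2
    rw [h1, Padic.valuation_ratCast, h2]; norm_num
  · have h1 : ((-17/15 : ℚ_[2]) - 9) = (((-152/15 : ℚ)) : ℚ_[2]) := by push_cast; ring
    have h2 := pvq19 3 (-19) 15 (by decide) (by decide) (by norm_num) (by norm_num)
    rw [show ((((2:ℤ)^3*(-19) : ℤ) : ℚ) / (((15:ℤ)) : ℚ)) = (-152/15 : ℚ) by norm_num] at h2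
    rw [h1, Padic.valuation_ratCast, h2]; norm_num
  · -- c ≡ 1 mod 2
    have hz : PadicInt.toZMod c = 1 := by
      have h3 : (PadicInt.toZMod c) ^ 3 = 1 := by
        rw [← map_pow, hc, show ((91 : ℤ_[2])) = ((91:ℕ) : ℤ_[2]) by norm_num, map_natCast]
        decide
      have h4 : ∀ a : ZMod 2, a ^ 3 = 1 → a = 1 := by decide
      exact h4 _ h3
    have hdvd : (2 : ℤ_[2]) ∣ (c - 1) := by
      have hmem : c - 1 ∈ RingHom.ker (PadicInt.toZMod (p := 2)) := by
        rw [RingHom.mem_ker, map_sub, map_one, hz, sub_self]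
      rw [PadicInt.ker_toZMod, PadicInt.maximalIdeal_eq_span_p, Ideal.mem_span_singleton] at hmem
      simpa using hmem
    obtain ⟨d, hd⟩ := hdvd
    have hd0 : d ≠ 0 := by
      rintro rfl
      rw [mul_zero, sub_eq_zero] at hd
      rw [hd, one_pow] at hc
      norm_num at hc
    -- cast to ℚ_[2]
    have hdq : ((c : ℚ_[2])) - 1 = 2 * ((d : ℤ_[2]) : ℚ_[2]) := by
      exact_mod_cast congrArg (fun x : ℤ_[2] => (x : ℚ_[2])) hd
    have hkey : (6/5 : ℚ_[2]) + 2 * (c : ℚ_[2])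
        = ((16/5 : ℚ) : ℚ_[2]) + 4 * ((d : ℤ_[2]) : ℚ_[2]) := by
      push_cast
      linear_combination 2 * hdq
    have hne : (6/5 : ℚ_[2]) + 2 * (c : ℚ_[2]) ≠ 0 := by
      intro h0
      have h2c : (2 : ℚ_[2]) * (c : ℚ_[2]) = -(6/5) := eq_neg_of_add_eq_zero_right h0
      have h8 : ((2 : ℚ_[2]) * (c : ℚ_[2])) ^ 3 = 8 * 91 := by
        rw [mul_pow]
        have : ((c : ℚ_[2])) ^ 3 = 91 := by exact_mod_cast congrArg (fun x : ℤ_[2] => (x : ℚ_[2])) hc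
        rw [this]; norm_num
      rw [h2c] at h8
      have h9 : ((-(6/5) : ℚ) : ℚ_[2]) ^ 3 = ((8 * 91 : ℚ) : ℚ_[2]) := by push_cast; exact_mod_cast h8
      rw [← Rat.cast_pow] at h9
      have := Rat.cast_injective (α := ℚ_[2]) h9
      norm_num at this
    have hv16 : (((16/5 : ℚ) : ℚ_[2])).valuation = 4 := by
      have h2 := pvq19 4 1 5 (by decide) (by decide) (by norm_num) (by norm_num)
      rw [show ((((2:ℤ)^4*1 : ℤ) : ℚ) / (((5:ℤ)) : ℚ)) = (16/5 : ℚ) by norm_num] at h2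
      rw [Padic.valuation_ratCast, h2]; norm_num
    have hvd : (2 : ℤ) ≤ ((4 : ℚ_[2]) * ((d : ℤ_[2]) : ℚ_[2])).valuation := by
      have hd' : ((d : ℤ_[2]) : ℚ_[2]) ≠ 0 := by
        simpa [PadicInt.coe_ne_zero] using hd0
      rw [Padic.valuation_mul (by norm_num) hd']
      have h4v : ((4 : ℚ_[2])).valuation = 2 := by
        rw [show ((4:ℚ_[2])) = ((4:ℚ) : ℚ_[2]) by norm_num, Padic.valuation_ratCast,
          show ((4:ℚ)) = (((2:ℤ)^2*1 : ℤ) : ℚ) / (((1:ℤ)) : ℚ) by norm_num,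
          pvq19 2 1 1 (by decide) (by decide) (by norm_num) (by norm_num)]
        norm_num
      rw [h4v]
      have := PadicInt.valuation_coe_nonneg (x := d)
      omega
    rw [hkey]
    calc (2 : ℤ) ≤ min ((((16/5 : ℚ) : ℚ_[2])).valuation)
          (((4 : ℚ_[2]) * ((d : ℤ_[2]) : ℚ_[2])).valuation) := by
            rw [hv16]; exact le_min (by norm_num) hvd
      _ ≤ _ := Padic.le_valuation_add (by rw [← hkey]; exact hne)
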